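/- The multiplication operator M_ψ is compact on S^2 if and only if ψ is identically zero. -/

import Mathlib

open Metric Filter

noncomputable def taylorCoeff (f : ℂ → ℂ) (n : ℕ) : ℂ :=
  iteratedDeriv n f 0 / n.factorial

/-- Membership in `S²`: `f` is analytic on the open unit disk, equals its Taylor
series there, and its coefficients satisfy `Σ n² |a n|² < ∞`. -/
def MemS2 (f : ℂ → ℂ) : Prop :=
  AnalyticOn ℂ f (ball (0:ℂ) 1) ∧
  (∀ z ∈ ball (0:ℂ) 1, HasSum (fun n : ℕ => taylorCoeff f n * z ^ n) (f z)) ∧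
  Summable (fun n : ℕ => ((n : ℝ))^2 * ‖taylorCoeff f n‖^2)

/-- The square of the `S²` norm: `|a₀|² + Σ_{n≥1} n² |aₙ|²`. -/
noncomputable def s2NormSq (f : ℂ → ℂ) : ℝ :=
  ‖taylorCoeff f 0‖^2 + ∑' n : ℕ, ((n : ℝ) + 1)^2 * ‖taylorCoeff f (n+1)‖^2

noncomputable def s2Norm (f : ℂ → ℂ) : ℝ := Real.sqrt (s2NormSq f)

/-- The square of the `H²` norm, in terms of Taylor coefficients. -/
noncomputable def h2NormSq (f : ℂ → ℂ) : ℝ := ∑' n : ℕ, ‖taylorCoeff f n‖^2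

noncomputable def h2Norm (f : ℂ → ℂ) : ℝ := Real.sqrt (h2NormSq f)

/-- An operator on functions is bounded on `S²`. -/
def BoundedOpS2 (T : (ℂ → ℂ) → (ℂ → ℂ)) : Prop :=
  (∀ f, MemS2 f → MemS2 (T f)) ∧
  ∃ C : ℝ, ∀ f, MemS2 f → s2Norm (T f) ≤ C * s2Norm f

/-- The operator norm of an operator on `S²`. -/
noncomputable def opNormS2 (T : (ℂ → ℂ) → (ℂ → ℂ)) : ℝ :=
  sInf {C : ℝ | 0 ≤ C ∧ ∀ f, MemS2 f → s2Norm (T f) ≤ C * s2Norm f}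

/-- An (analytic) automorphism of the unit disk. -/
def IsDiskAut (φ : ℂ → ℂ) : Prop :=
  AnalyticOn ℂ φ (ball (0:ℂ) 1) ∧ Set.BijOn φ (ball (0:ℂ) 1) (ball (0:ℂ) 1)
/-- Compactness of an operator on `S²`: every bounded sequence has a subsequence
whose image converges in the `S²` norm. -/
def CompactOpS2 (T : (ℂ → ℂ) → (ℂ → ℂ)) : Prop :=
  ∀ f : ℕ → (ℂ → ℂ), (∀ k, MemS2 (f k) ∧ s2Norm (f k) ≤ 1) →
    ∃ σ : ℕ → ℕ, StrictMono σ ∧ ∃ g : ℂ → ℂ, MemS2 g ∧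
      Tendsto (fun k => s2Norm (T (f (σ k)) - g)) atTop (nhds 0)

/-! ### Auxiliary lemmas -/

lemma eball_one' : Metric.eball (0:ℂ) 1 = ball (0:ℂ) 1 := by
  rw [show (1:ENNReal) = ((1:NNReal):ENNReal) by simp, Metric.emetric_ball_nnreal]
  norm_num

lemma hasFPowerSeriesOnBall_of_hasSum' {F : ℂ → ℂ} {c : ℕ → ℂ}
    (hc : ∀ z ∈ ball (0:ℂ) 1, HasSum (fun n : ℕ => c n * z ^ n) (F z)) :
    HasFPowerSeriesOnBall F (FormalMultilinearSeries.ofScalars ℂ c) 0 1 := by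
  constructor
  · apply ENNReal.le_of_forall_nnreal_lt
    intro r hr
    have hz : (r : ℂ) ∈ ball (0:ℂ) 1 := by
      simp only [mem_ball, dist_zero_right]
      rw [Complex.norm_real]
      simpa using (ENNReal.coe_lt_one_iff.mp hr)
    have hs := (hc _ hz).summable.tendsto_atTop_zero.norm
    rw [norm_zero] at hs
    apply FormalMultilinearSeries.le_radius_of_tendsto _ (l := 0)
    convert hs using 2 with n
    rw [FormalMultilinearSeries.ofScalars_norm, norm_mul, norm_pow, Complex.norm_real]
    simp
  · exact one_pos
  · intro y hy
    rw [eball_one'] at hy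
    simp only [zero_add]
    have := hc y hy
    convert this using 2 with n
    · rfl
    rw [FormalMultilinearSeries.ofScalars_apply_eq, smul_eq_mul]

lemma taylorCoeff_eq_of_hasSum' {F : ℂ → ℂ} {c : ℕ → ℂ}
    (hc : ∀ z ∈ ball (0:ℂ) 1, HasSum (fun n : ℕ => c n * z ^ n) (F z)) (n : ℕ) :
    taylorCoeff F n = c n := by
  have h := hasFPowerSeriesOnBall_of_hasSum' hc
  have h1 := h.factorial_smul 1 n
  rw [FormalMultilinearSeries.ofScalars_apply_eq] at h1
  simp only [one_pow, smul_eq_mul, mul_one, nsmul_eq_mul] at h1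
  rw [taylorCoeff, iteratedDeriv_eq_iteratedFDeriv, ← h1]
  exact mul_div_cancel_left₀ _ (by exact_mod_cast n.factorial_ne_zero)

lemma analyticOn_of_hasSum' {F : ℂ → ℂ} {c : ℕ → ℂ}
    (hc : ∀ z ∈ ball (0:ℂ) 1, HasSum (fun n : ℕ => c n * z ^ n) (F z)) :
    AnalyticOn ℂ F (ball (0:ℂ) 1) := by
  have := (hasFPowerSeriesOnBall_of_hasSum' hc).analyticOnNhd
  rw [eball_one'] at this
  exact this.analyticOn

lemma s2NormSq_nonneg' (f : ℂ → ℂ) : 0 ≤ s2NormSq f := by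
  apply add_nonneg (sq_nonneg _)
  exact tsum_nonneg fun n => mul_nonneg (sq_nonneg _) (sq_nonneg _)

lemma memS2_zero' : MemS2 (fun _ : ℂ => (0:ℂ)) := by
  have hzc : ∀ z ∈ ball (0:ℂ) 1, HasSum (fun n : ℕ => (0:ℂ) * z ^ n)
      ((fun _ : ℂ => (0:ℂ)) z) := by
    intro z _
    simpa using hasSum_zero
  have hz0 := taylorCoeff_eq_of_hasSum' hzc
  refine ⟨analyticOn_of_hasSum' hzc, ?_, ?_⟩
  · intro z hz
    have := hzc z hz
    convert this using 2 with n
    rw [hz0]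
  · apply Summable.congr (f := fun _ : ℕ => (0:ℝ)) summable_zero
    intro n
    rw [hz0]
    simp

lemma s2Norm_zero_of_eqOn' {F : ℂ → ℂ} (h : ∀ z ∈ ball (0:ℂ) 1, F z = 0) :
    s2Norm F = 0 := by
  have hc : ∀ z ∈ ball (0:ℂ) 1, HasSum (fun n : ℕ => (0:ℂ) * z ^ n) (F z) := by
    intro z hz
    rw [h z hz]
    simpa using hasSum_zero
  have hcoeff := taylorCoeff_eq_of_hasSum' hc
  rw [s2Norm, s2NormSq, hcoeff 0]
  have hfun : (fun n : ℕ => ((n:ℝ)+1)^2 * ‖taylorCoeff F (n+1)‖^2)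
      = fun _ : ℕ => (0:ℝ) := by
    funext n
    rw [hcoeff]
    simp
  rw [hfun, tsum_zero]
  simp

theorem multiplication_compact_iff (ψ : ℂ → ℂ) (hψ : MemS2 ψ) :
    CompactOpS2 (fun f => fun z => ψ z * f z) ↔ ∀ z ∈ ball (0:ℂ) 1, ψ z = 0 := by
  constructor
  · intro hcomp
    set a : ℕ → ℂ := taylorCoeff ψ with ha
    have hψsum : ∀ z ∈ ball (0:ℂ) 1, HasSum (fun n : ℕ => a n * z ^ n) (ψ z) := hψ.2.1
    -- test functions f k z = (k+1)⁻¹ z^(k+1)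
    set f : ℕ → ℂ → ℂ := fun k z => ((k:ℂ)+1)⁻¹ * z ^ (k+1) with hf
    have cf : ∀ k, ∀ z ∈ ball (0:ℂ) 1, HasSum
        (fun n : ℕ => (if n = k+1 then ((k:ℂ)+1)⁻¹ else 0) * z ^ n) (f k z) := by
      intro k z _
      have he : (fun n : ℕ => (if n = k+1 then ((k:ℂ)+1)⁻¹ else 0) * z ^ n)
          = fun n : ℕ => if n = k+1 then ((k:ℂ)+1)⁻¹ * z ^ (k+1) else 0 := by
        funext n; split_ifs with h
        · rw [h]
        · rw [zero_mul]
      rw [he]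
      exact hasSum_ite_eq _ _
    have hknorm : ∀ k : ℕ, ‖((k:ℂ)+1)⁻¹‖ = ((k:ℝ)+1)⁻¹ := by
      intro k
      rw [norm_inv, show ((k:ℂ)+1) = ((k+1:ℕ):ℂ) by push_cast; ring, Complex.norm_natCast]
      push_cast; ring
    have hkpos : ∀ k : ℕ, (0:ℝ) < (k:ℝ)+1 := fun k => by positivity
    have hfS2 : ∀ k, MemS2 (f k) ∧ s2Norm (f k) ≤ 1 := by
      intro k
      have hcoeff := taylorCoeff_eq_of_hasSum' (cf k)
      constructor
      · refine ⟨analyticOn_of_hasSum' (cf k), ?_, ?_⟩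
        · intro z hz
          have := cf k z hz
          convert this using 2 with n
          rw [hcoeff]
        · apply summable_of_ne_finset_zero (s := {k+1})
          intro n hn
          rw [hcoeff, if_neg (by simpa using hn)]
          simp
      · have hsq : s2NormSq (f k) = 1 := by
          rw [s2NormSq, hcoeff 0, if_neg (by omega)]
          rw [tsum_eq_single k ?_]
          · rw [hcoeff, if_pos rfl, hknorm]
            simp only [norm_zero]
            rw [inv_pow]
            field_simp
            norm_num
          · intro n hn
            rw [hcoeff, if_neg (by omega)]
            simp
        rw [s2Norm, hsq, Real.sqrt_one]
    obtain ⟨σ, hσ, g, hg, htend⟩ := hcomp f hfS2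
    set cg : ℕ → ℂ := taylorCoeff g with hcg
    have hgsum : ∀ z ∈ ball (0:ℂ) 1, HasSum (fun n : ℕ => cg n * z ^ n) (g z) := hg.2.1
    set C : ℕ → ℂ := fun k => ((σ k : ℂ)+1)⁻¹ with hC
    set b : ℕ → ℕ → ℂ := fun k n => if σ k + 1 ≤ n then C k * a (n - (σ k + 1)) else 0 with hb
    set d : ℕ → ℂ → ℂ := fun k => (fun z => ψ z * f (σ k) z) - g with hd
    have htend' : Tendsto (fun k => s2Norm (d k)) atTop (nhds 0) := htend
    have hbpos : ∀ k n, b k (n + (σ k + 1)) = C k * a n := by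
      intro k n
      simp only [hb]
      rw [if_pos (by omega), Nat.add_sub_cancel]
    have hbneg : ∀ k n, n < σ k + 1 → b k n = 0 := by
      intro k n h
      simp only [hb]
      rw [if_neg (by omega)]
    -- power series of ψ * f (σ k)
    have hbsum : ∀ k, ∀ z ∈ ball (0:ℂ) 1,
        HasSum (fun n : ℕ => b k n * z ^ n) (ψ z * f (σ k) z) := by
      intro k z hz
      have h1 := (hψsum z hz).mul_left (C k * z ^ (σ k + 1))
      have hinj : Function.Injective (fun n : ℕ => n + (σ k + 1)) := add_left_injective _
      have hvan : ∀ m ∉ Set.range (fun n : ℕ => n + (σ k + 1)),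
          b k m * z ^ m = 0 := by
        intro m hm
        have hle : ¬ (σ k + 1 ≤ m) := by
          intro hle
          exact hm ⟨m - (σ k + 1), show m - (σ k + 1) + (σ k + 1) = m by omega⟩
        rw [hbneg k m (by omega), zero_mul]
      rw [← hinj.hasSum_iff hvan]
      convert h1 using 1
      · rfl
      · funext n
        simp only [Function.comp_apply]
        rw [hbpos, pow_add]
        ring
      · rw [hf]; ring
    -- power series of the difference
    have hdsum : ∀ k, ∀ z ∈ ball (0:ℂ) 1,
        HasSum (fun n : ℕ => (b k n - cg n) * z ^ n) (d k z) := by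
      intro k z hz
      have := (hbsum k z hz).sub (hgsum z hz)
      simpa [hd, sub_mul] using this
    have ht : ∀ k n, taylorCoeff (d k) n = b k n - cg n :=
      fun k => taylorCoeff_eq_of_hasSum' (hdsum k)
    -- summability facts
    have s1 : Summable (fun n : ℕ => (n:ℝ)^2 * ‖a n‖^2) := hψ.2.2
    have s0 : Summable (fun n : ℕ => ‖a n‖^2) := by
      have h2 : Summable (fun n : ℕ => ‖a (n+1)‖^2) := by
        apply Summable.of_nonneg_of_le (fun n => sq_nonneg _) _
          ((summable_nat_add_iff 1).mpr s1)
        intro n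
        have h1 : (1:ℝ) ≤ ((n+1:ℕ):ℝ)^2 := by
          push_cast; nlinarith [Nat.cast_nonneg (α := ℝ) n]
        nlinarith [sq_nonneg (‖a (n+1)‖)]
      exact (summable_nat_add_iff 1).mp h2
    have Sa : Summable (fun n : ℕ => ((n:ℝ)+1)^2 * ‖a n‖^2) := by
      apply Summable.of_nonneg_of_le (fun n => by positivity) _
        ((s1.mul_left 2).add (s0.mul_left 2))
      intro n
      nlinarith [sq_nonneg (‖a n‖), sq_nonneg ((n:ℝ) - 1)]
    have Sg : Summable (fun n : ℕ => ((n:ℝ)+1)^2 * ‖cg (n+1)‖^2) := by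
      apply ((summable_nat_add_iff 1).mpr hg.2.2).congr
      intro n; push_cast; ring
    have hCnorm : ∀ k, ‖C k‖ = ((σ k : ℝ)+1)⁻¹ := fun k => hknorm (σ k)
    have Sb : ∀ k, Summable (fun n : ℕ => ((n:ℝ)+1)^2 * ‖b k (n+1)‖^2) := by
      intro k
      have hinj : Function.Injective (fun j : ℕ => j + σ k) := add_left_injective _
      have hvan : ∀ m ∉ Set.range (fun j : ℕ => j + σ k),
          ((m:ℝ)+1)^2 * ‖b k (m+1)‖^2 = 0 := by
        intro m hm
        have hle : ¬ (σ k + 1 ≤ m + 1) := by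
          intro hle
          exact hm ⟨m - σ k, show m - σ k + σ k = m by omega⟩
        rw [hbneg k (m+1) (by omega)]; simp
      rw [← hinj.summable_iff hvan]
      apply Summable.of_nonneg_of_le (fun j => by simp only [Function.comp_apply]; positivity) _ Sa
      intro j
      simp only [Function.comp_apply]
      rw [show j + σ k + 1 = j + (σ k + 1) by omega, hbpos, norm_mul, hCnorm]
      have hs0 : (0:ℝ) ≤ (σ k : ℝ) := Nat.cast_nonneg _
      have hj0 : (0:ℝ) ≤ (j : ℝ) := Nat.cast_nonneg _
      have hcast : ((j + σ k : ℕ):ℝ) = (j:ℝ) + (σ k : ℝ) := by push_cast; ring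
      rw [hcast]
      have hinv : ((σ k : ℝ)+1)⁻¹ ^ 2 * ((σ k : ℝ)+1) ^ 2 = 1 := by
        rw [← mul_pow, inv_mul_cancel₀ (by positivity)]; norm_num
      have hkey : ((j:ℝ) + (σ k:ℝ) + 1)^2 * (((σ k : ℝ)+1)⁻¹)^2 ≤ ((j:ℝ)+1)^2 := by
        have hab : (j:ℝ) + (σ k:ℝ) + 1 ≤ ((j:ℝ)+1) * ((σ k:ℝ)+1) := by
          nlinarith [mul_nonneg hj0 hs0]
        have h2 : ((j:ℝ) + (σ k:ℝ) + 1)^2 ≤ ((j:ℝ)+1)^2 * ((σ k : ℝ)+1)^2 := by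
          calc ((j:ℝ) + (σ k:ℝ) + 1)^2 ≤ (((j:ℝ)+1) * ((σ k:ℝ)+1))^2 :=
                pow_le_pow_left₀ (by positivity) hab 2
            _ = ((j:ℝ)+1)^2 * ((σ k : ℝ)+1)^2 := by ring
        calc ((j:ℝ) + (σ k:ℝ) + 1)^2 * (((σ k : ℝ)+1)⁻¹)^2
            ≤ ((j:ℝ)+1)^2 * ((σ k : ℝ)+1)^2 * (((σ k : ℝ)+1)⁻¹)^2 := by
              apply mul_le_mul_of_nonneg_right h2 (by positivity)
          _ = ((j:ℝ)+1)^2 := by rw [mul_assoc, mul_comm (((σ k : ℝ)+1)^2), hinv, mul_one]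
      calc ((j:ℝ) + (σ k:ℝ) + 1)^2 * (((σ k : ℝ)+1)⁻¹ * ‖a j‖)^2
          = (((j:ℝ) + (σ k:ℝ) + 1)^2 * (((σ k : ℝ)+1)⁻¹)^2) * ‖a j‖^2 := by ring
        _ ≤ ((j:ℝ)+1)^2 * ‖a j‖^2 := by
            apply mul_le_mul_of_nonneg_right hkey (sq_nonneg _)
    have Sd : ∀ k, Summable (fun n : ℕ => ((n:ℝ)+1)^2 * ‖b k (n+1) - cg (n+1)‖^2) := by
      intro k
      apply Summable.of_nonneg_of_le (fun n => by positivity) _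
        (((Sb k).mul_left 2).add (Sg.mul_left 2))
      intro n
      have h1 : ‖b k (n+1) - cg (n+1)‖ ≤ ‖b k (n+1)‖ + ‖cg (n+1)‖ := norm_sub_le _ _
      have h2 : ‖b k (n+1) - cg (n+1)‖^2 ≤ 2 * ‖b k (n+1)‖^2 + 2 * ‖cg (n+1)‖^2 := by
        nlinarith [norm_nonneg (b k (n+1) - cg (n+1)), norm_nonneg (b k (n+1)),
          norm_nonneg (cg (n+1)), sq_nonneg (‖b k (n+1)‖ - ‖cg (n+1)‖)]
      nlinarith [sq_nonneg ((n:ℝ)+1)]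
    -- key bounds
    have key : ∀ k : ℕ, ∀ n : ℕ, ((n:ℝ)+1)^2 * ‖b k (n+1) - cg (n+1)‖^2 ≤ s2NormSq (d k) := by
      intro k n
      have hS : Summable (fun m : ℕ => ((m:ℝ)+1)^2 * ‖taylorCoeff (d k) (m+1)‖^2) := by
        apply (Sd k).congr
        intro m
        rw [ht]
      have h1 : ((n:ℝ)+1)^2 * ‖taylorCoeff (d k) (n+1)‖^2
          ≤ ∑' m : ℕ, ((m:ℝ)+1)^2 * ‖taylorCoeff (d k) (m+1)‖^2 :=
        Summable.le_tsum hS n (fun m _ => by positivity)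
      rw [ht] at h1
      rw [s2NormSq]
      exact h1.trans (le_add_of_nonneg_left (sq_nonneg _))
    have key0 : ∀ k, ‖b k 0 - cg 0‖^2 ≤ s2NormSq (d k) := by
      intro k
      rw [s2NormSq, ht]
      exact le_add_of_nonneg_right (tsum_nonneg fun m => by positivity)
    -- the squared norms tend to zero
    have hlim : Tendsto (fun k => s2NormSq (d k)) atTop (nhds 0) := by
      have h0 := htend'.mul htend'
      rw [mul_zero] at h0
      apply h0.congr
      intro k
      exact Real.mul_self_sqrt (s2NormSq_nonneg' _)
    -- all Taylor coefficients of g vanish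
    have hg0 : ∀ n, cg n = 0 := by
      intro n
      have hnorm0 : ‖cg n‖^2 ≤ 0 := by
        cases n with
        | zero =>
          have hk : ∀ k, ‖cg 0‖^2 ≤ s2NormSq (d k) := by
            intro k
            have h1 := key0 k
            rwa [hbneg k 0 (by omega), zero_sub, norm_neg] at h1
          exact ge_of_tendsto' hlim hk
        | succ m =>
          have hev : ∀ᶠ k in atTop, ((m:ℝ)+1)^2 * ‖cg (m+1)‖^2 ≤ s2NormSq (d k) := by
            rw [eventually_atTop]
            refine ⟨m+1, fun k hk => ?_⟩
            have h1 := key k m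
            have hσk : m + 1 < σ k + 1 := by
              have hka : k ≤ σ k := hσ.le_apply
              omega
            rwa [hbneg k (m+1) (by omega), zero_sub, norm_neg] at h1
          have h2 : ((m:ℝ)+1)^2 * ‖cg (m+1)‖^2 ≤ 0 := ge_of_tendsto hlim hev
          have h3 : (0:ℝ) < ((m:ℝ)+1)^2 := by positivity
          nlinarith [sq_nonneg (‖cg (m+1)‖)]
      have : ‖cg n‖ = 0 := by nlinarith [norm_nonneg (cg n), sq_nonneg (‖cg n‖)]
      exact norm_eq_zero.mp this
    -- all Taylor coefficients of ψ vanish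
    have ha0 : ∀ j, a j = 0 := by
      intro j
      have hk : ∀ k, ‖a j‖^2 ≤ s2NormSq (d k) := by
        intro k
        have h1 := key k (j + σ k)
        rw [hg0, sub_zero] at h1
        have hb1 : b k (j + σ k + 1) = C k * a j := by
          rw [show j + σ k + 1 = j + (σ k + 1) by omega, hbpos]
        rw [hb1, norm_mul, hCnorm] at h1
        refine le_trans ?_ h1
        have hs0 : (0:ℝ) ≤ (σ k : ℝ) := Nat.cast_nonneg _
        have hj0 : (0:ℝ) ≤ (j : ℝ) := Nat.cast_nonneg _
        have hcast : ((j + σ k : ℕ):ℝ) = (j:ℝ) + (σ k : ℝ) := by push_cast; ring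
        rw [hcast]
        have hone : (1:ℝ) ≤ ((j:ℝ) + (σ k:ℝ) + 1)^2 * (((σ k : ℝ)+1)⁻¹)^2 := by
          have hlow : ((σ k:ℝ)+1)^2 ≤ ((j:ℝ) + (σ k:ℝ) + 1)^2 := by
            apply pow_le_pow_left₀ (by positivity)
            linarith
          have hinv2 : (0:ℝ) < (((σ k : ℝ)+1)⁻¹)^2 := by positivity
          have := mul_le_mul_of_nonneg_right hlow (le_of_lt hinv2)
          rwa [← mul_pow, mul_inv_cancel₀ (by positivity), one_pow] at this
        calc ‖a j‖^2 = 1 * ‖a j‖^2 := by ring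
          _ ≤ (((j:ℝ) + (σ k:ℝ) + 1)^2 * (((σ k : ℝ)+1)⁻¹)^2) * ‖a j‖^2 :=
              mul_le_mul_of_nonneg_right hone (sq_nonneg _)
          _ = ((j:ℝ) + (σ k:ℝ) + 1)^2 * (((σ k : ℝ)+1)⁻¹ * ‖a j‖)^2 := by ring
      have h2 : ‖a j‖^2 ≤ 0 := ge_of_tendsto' hlim hk
      have : ‖a j‖ = 0 := by nlinarith [norm_nonneg (a j)]
      exact norm_eq_zero.mp this
    -- conclude ψ = 0 on the ball
    intro z hz
    have hsum := hψsum z hz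
    have h00 : (fun n : ℕ => a n * z ^ n) = fun _ : ℕ => (0:ℂ) := by
      funext n; rw [ha0, zero_mul]
    rw [h00] at hsum
    exact hsum.unique hasSum_zero
  · intro h0 fseq hfseq
    refine ⟨id, strictMono_id, (fun _ => 0), memS2_zero', ?_⟩
    have hzero : ∀ k : ℕ, s2Norm ((fun f => fun z => ψ z * f z) (fseq (id k))
        - (fun _ : ℂ => (0:ℂ))) = 0 := by
      intro k
      apply s2Norm_zero_of_eqOn'
      intro z hz
      simp only [Pi.sub_apply]
      rw [h0 z hz]
      ring
    have heq : (fun k : ℕ => s2Norm ((fun f => fun z => ψ z * f z) (fseq (id k))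
        - (fun _ : ℂ => (0:ℂ)))) = fun _ : ℕ => (0:ℝ) := funext hzero
    rw [heq]
    exact tendsto_const_nhds
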